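/- Let g be a symmetric invertible 4×4 real matrix with inverse entries g^{λσ}. Then every K : Fin 4 → Fin 4 → Fin 4 → ℝ satisfying Σ_α K^α_{αγ} = 0 for all γ and K^α_{βγ} + K^α_{γβ} = 0 for all α, β, γ, can be reconstructed from the tensors S: K^α_{βγ} = (1/2) Σ_{ν,σ,τ,λ,ρ} K^ν_{στ} g^{λσ} g^{ρτ} S^α_{βγ,λρν} for all α, β, γ. (The paper's claim that every such K is a linear combination of the S^α_{βγ,λρν}.) -/
import Mathlib


/-- Every `K` with `Σ_α K^α_{αγ} = 0` and `K^α_{βγ} + K^α_{γβ} = 0` is a linear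
combination of the tensors `S^α_{βγ,λρν}` of the Einstein–Palatini model:
`K^α_{βγ} = (1/2) K^ν_{στ} g^{λσ} g^{ρτ} S^α_{βγ,λρν}`. -/
theorem stmt16 (g ginv : Fin 4 → Fin 4 → ℝ)
    (hsym : ∀ i j, g i j = g j i)
    (hinv : ∀ a c, (∑ b, ginv a b * g b c) = if a = c then (1 : ℝ) else 0)
    (S : Fin 4 → Fin 4 → Fin 4 → Fin 4 → Fin 4 → Fin 4 → ℝ)
    (hS : ∀ a b c l r ν, S a b c l r ν =
      (1 / 3) * g l ν * g r b * (if a = c then (1 : ℝ) else 0)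
      - (1 / 3) * g r ν * g l b * (if a = c then (1 : ℝ) else 0)
      + (1 / 3) * g r ν * g l c * (if a = b then (1 : ℝ) else 0)
      - (1 / 3) * g l ν * g r c * (if a = b then (1 : ℝ) else 0)
      + g l b * g r c * (if a = ν then (1 : ℝ) else 0)
      - g r b * g l c * (if a = ν then (1 : ℝ) else 0))
    (K : Fin 4 → Fin 4 → Fin 4 → ℝ)
    (htrace : ∀ c, (∑ a, K a a c) = 0)
    (hanti : ∀ a b c, K a b c + K a c b = 0) :
    ∀ a b c, K a b c =
      (1 / 2) * ∑ ν, ∑ σ, ∑ τ, ∑ l, ∑ r,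
        K ν σ τ * ginv l σ * ginv r τ * S a b c l r ν := by
  have hinv2 : ∀ x y, (∑ l, g x l * ginv l y) = if x = y then (1:ℝ) else 0 := by
    have h1 : (Matrix.of ginv) * (Matrix.of g) = 1 := by
      ext a c
      simpa [Matrix.mul_apply, Matrix.one_apply] using hinv a c
    have h2 : (Matrix.of g) * (Matrix.of ginv) = 1 := mul_eq_one_comm.mp h1
    intro x y
    have := congrFun (congrFun h2 x) y
    simpa [Matrix.mul_apply, Matrix.one_apply] using this
  have hA : ∀ x y, (∑ l, ginv l x * g l y) = if x = y then (1:ℝ) else 0 := by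
    intro x y
    calc (∑ l, ginv l x * g l y) = ∑ l, g y l * ginv l x := by
          refine Finset.sum_congr rfl fun l _ => ?_
          rw [hsym l y]; ring
      _ = if y = x then 1 else 0 := hinv2 y x
      _ = if x = y then 1 else 0 := by by_cases h : x = y <;> simp [h, eq_comm]
  have htrace2 : ∀ x, (∑ ν, K ν x ν) = 0 := by
    intro x
    have h : ∀ ν, K ν x ν = - K ν ν x := fun ν => by linarith [hanti ν x ν]
    simp only [h, Finset.sum_neg_distrib, htrace x, neg_zero]
  intro a b c
  have hprod : ∀ (σ τ x y : Fin 4),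
      (∑ l, ∑ r, ginv l σ * g l x * (ginv r τ * g r y))
        = (if σ = x then (1:ℝ) else 0) * (if τ = y then (1:ℝ) else 0) := by
    intro σ τ x y
    rw [← hA σ x, ← hA τ y, Finset.sum_mul_sum]
  have main : ∀ ν σ τ : Fin 4,
      (∑ l, ∑ r, K ν σ τ * ginv l σ * ginv r τ * S a b c l r ν)
      = K ν σ τ * (
        (1/3) * (if a = c then (1:ℝ) else 0) * ((if σ = ν then (1:ℝ) else 0) * (if τ = b then (1:ℝ) else 0))
      - (1/3) * (if a = c then (1:ℝ) else 0) * ((if σ = b then (1:ℝ) else 0) * (if τ = ν then (1:ℝ) else 0))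
      + (1/3) * (if a = b then (1:ℝ) else 0) * ((if σ = c then (1:ℝ) else 0) * (if τ = ν then (1:ℝ) else 0))
      - (1/3) * (if a = b then (1:ℝ) else 0) * ((if σ = ν then (1:ℝ) else 0) * (if τ = c then (1:ℝ) else 0))
      + (if a = ν then (1:ℝ) else 0) * ((if σ = b then (1:ℝ) else 0) * (if τ = c then (1:ℝ) else 0))
      - (if a = ν then (1:ℝ) else 0) * ((if σ = c then (1:ℝ) else 0) * (if τ = b then (1:ℝ) else 0))) := by
    intro ν σ τ
    have hpt : ∀ l r, K ν σ τ * ginv l σ * ginv r τ * S a b c l r ν =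
        K ν σ τ * ((1/3) * (if a = c then (1:ℝ) else 0) * (ginv l σ * g l ν * (ginv r τ * g r b))
        - (1/3) * (if a = c then (1:ℝ) else 0) * (ginv l σ * g l b * (ginv r τ * g r ν))
        + (1/3) * (if a = b then (1:ℝ) else 0) * (ginv l σ * g l c * (ginv r τ * g r ν))
        - (1/3) * (if a = b then (1:ℝ) else 0) * (ginv l σ * g l ν * (ginv r τ * g r c))
        + (if a = ν then (1:ℝ) else 0) * (ginv l σ * g l b * (ginv r τ * g r c))
        - (if a = ν then (1:ℝ) else 0) * (ginv l σ * g l c * (ginv r τ * g r b))) := by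
      intro l r; rw [hS]; ring
    simp only [hpt, ← Finset.mul_sum]
    congr 1
    simp only [Finset.sum_sub_distrib, Finset.sum_add_distrib, ← Finset.mul_sum,
      ← Finset.sum_mul, hA]
  simp only [main]
  simp only [mul_sub, mul_add, Finset.sum_sub_distrib, Finset.sum_add_distrib,
    mul_ite, ite_mul, mul_zero, zero_mul, mul_one, one_mul,
    Finset.sum_ite_eq, Finset.sum_ite_eq', Finset.mem_univ, if_true]
  simp only [Finset.sum_ite_irrel, ← Finset.sum_mul, htrace, htrace2, zero_mul,
    Finset.sum_const_zero, ite_self, mul_zero, zero_sub, add_zero, sub_zero, zero_add]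
  have h1 := htrace b
  have h2 := htrace2 b
  have h3 := htrace2 c
  have h4 := htrace c
  have h5 := hanti a b c
  linarith
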